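/- arXiv:1501.04256 — 2 statements merged into one kernel-verified Lean document; each statement's English description precedes it below -/
import Mathlib

section
/- For every real x with |x| < 1 and every nonnegative integer m, the series sum_{n=0}^∞ n^m x^n converges and equals (1/(1-x)) * ω_m(x/(1-x)), where ω_m(t) = sum_{k=0}^m S(m,k) * k! * t^k is the geometric polynomial. -/
/-- Stirling numbers of the second kind, via the standard recurrence. -/
def stirling2 : ℕ → ℕ → ℕ
  | 0, 0 => 1
  | 0, _ + 1 => 0
  | _ + 1, 0 => 0
  | m + 1, n + 1 => (n + 1) * stirling2 m (n + 1) + stirling2 m n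

lemma stirling2_eq_zero : ∀ m k, m < k → stirling2 m k = 0 := by
  intro m
  induction m with
  | zero => intro k hk; match k, hk with | k+1, _ => rfl
  | succ m ih =>
    intro k hk
    match k, hk with
    | k+1, hk =>
      show (k + 1) * stirling2 m (k + 1) + stirling2 m k = 0
      rw [ih (k+1) (by omega), ih k (by omega)]
      simp

lemma choose_aux (n k : ℕ) :
    n * n.choose k = k * n.choose k + (k + 1) * n.choose (k + 1) := by
  have hp : (n + 1).choose (k + 1) = n.choose k + n.choose (k + 1) :=
    Nat.choose_succ_succ n k
  have h : (n + 1) * n.choose k = (n + 1).choose (k + 1) * (k + 1) :=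
    Nat.add_one_mul_choose_eq n k
  rw [hp] at h
  have h2 : n * n.choose k + n.choose k =
      (k * n.choose k + (k + 1) * n.choose (k + 1)) + n.choose k := by
    calc n * n.choose k + n.choose k = (n + 1) * n.choose k := by ring
      _ = (n.choose k + n.choose (k + 1)) * (k + 1) := h
      _ = (k * n.choose k + (k + 1) * n.choose (k + 1)) + n.choose k := by ring
  exact Nat.add_right_cancel h2

lemma pow_eq_sum_stirling (m : ℕ) : ∀ n : ℕ,
    n ^ m = ∑ k ∈ Finset.range (m + 1), stirling2 m k * k.factorial * n.choose k := by
  induction m with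
  | zero => intro n; simp [stirling2]
  | succ m ih =>
    intro n
    have key : n ^ (m + 1) = ∑ k ∈ Finset.range (m + 1),
        stirling2 m k * k.factorial * (k * n.choose k + (k + 1) * n.choose (k + 1)) := by
      rw [pow_succ, ih n, Finset.sum_mul]
      exact Finset.sum_congr rfl fun k _ => by rw [mul_assoc, ← choose_aux]; ring
    rw [key]
    conv_rhs => rw [Finset.sum_range_succ']
    have h0 : stirling2 (m + 1) 0 * Nat.factorial 0 * n.choose 0 = 0 := by
      simp [show stirling2 (m+1) 0 = 0 from rfl]
    rw [h0, add_zero]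
    have hrec : ∀ j, stirling2 (m + 1) (j + 1) = (j + 1) * stirling2 m (j + 1) + stirling2 m j :=
      fun j => rfl
    -- split both sides
    have lhs_split : ∑ k ∈ Finset.range (m + 1),
        stirling2 m k * k.factorial * (k * n.choose k + (k + 1) * n.choose (k + 1)) =
        (∑ k ∈ Finset.range (m + 1), k * stirling2 m k * k.factorial * n.choose k) +
        ∑ k ∈ Finset.range (m + 1), stirling2 m k * (k + 1).factorial * n.choose (k + 1) := by
      rw [← Finset.sum_add_distrib]
      refine Finset.sum_congr rfl fun k _ => ?_
      rw [Nat.factorial_succ]; ring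
    rw [lhs_split]
    have rhs_split : ∑ j ∈ Finset.range (m + 1),
        stirling2 (m + 1) (j + 1) * (j + 1).factorial * n.choose (j + 1) =
        (∑ j ∈ Finset.range (m + 1),
          (j + 1) * stirling2 m (j + 1) * (j + 1).factorial * n.choose (j + 1)) +
        ∑ j ∈ Finset.range (m + 1), stirling2 m j * (j + 1).factorial * n.choose (j + 1) := by
      rw [← Finset.sum_add_distrib]
      refine Finset.sum_congr rfl fun j _ => ?_
      rw [hrec]; ring
    rw [rhs_split]
    congr 1
    -- shift: ∑_{j<m+1} g(j+1) = ∑_{k<m+1} g k where g k = k * S m k * k! * C n k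
    have shift : ∑ j ∈ Finset.range (m + 1),
        (j + 1) * stirling2 m (j + 1) * (j + 1).factorial * n.choose (j + 1) =
        ∑ k ∈ Finset.range (m + 2), k * stirling2 m k * k.factorial * n.choose k := by
      rw [Finset.sum_range_succ' (fun k => k * stirling2 m k * k.factorial * n.choose k)]
      simp
    rw [shift]
    conv_rhs => rw [Finset.sum_range_succ]
    rw [stirling2_eq_zero m (m + 1) (by omega)]
    simp

lemma hasSum_choose (k : ℕ) {x : ℝ} (hx : |x| < 1) :
    HasSum (fun n : ℕ => (n.choose k : ℝ) * x ^ n) (x ^ k / (1 - x) ^ (k + 1)) := by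
  have hx' : ‖x‖ < 1 := by rwa [Real.norm_eq_abs]
  have h := (hasSum_choose_mul_geometric_of_norm_lt_one k hx').mul_left (x ^ k)
  have hfun : (fun n : ℕ => x ^ k * (((n + k).choose k : ℝ) * x ^ n)) =
      fun n : ℕ => (((n + k).choose k : ℝ)) * x ^ (n + k) := by
    funext n; rw [pow_add]; ring
  rw [hfun] at h
  have hz : ∑ i ∈ Finset.range k, (i.choose k : ℝ) * x ^ i = 0 := by
    refine Finset.sum_eq_zero fun i hi => ?_
    rw [Finset.mem_range] at hi
    rw [Nat.choose_eq_zero_of_lt hi]; simp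
  refine (hasSum_nat_add_iff' (f := fun n : ℕ => (n.choose k : ℝ) * x ^ n) k).1 ?_
  convert h using 1
  · rfl
  rw [hz, sub_zero, mul_one_div]

theorem geometric_series_pow_eq_geometric_poly (x : ℝ) (hx : |x| < 1) (m : ℕ) :
    HasSum (fun n : ℕ => (n : ℝ) ^ m * x ^ n)
      ((1 / (1 - x)) *
        ∑ k ∈ Finset.range (m + 1),
          (stirling2 m k : ℝ) * (k.factorial : ℝ) * (x / (1 - x)) ^ k) := by
  have hx1 : (1 : ℝ) - x ≠ 0 := by
    intro h
    have : x = 1 := by linarith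
    rw [this] at hx; norm_num at hx
  have hsum : HasSum (fun n : ℕ => ∑ k ∈ Finset.range (m + 1),
      (stirling2 m k : ℝ) * (k.factorial : ℝ) * ((n.choose k : ℝ) * x ^ n))
      (∑ k ∈ Finset.range (m + 1),
        (stirling2 m k : ℝ) * (k.factorial : ℝ) * (x ^ k / (1 - x) ^ (k + 1))) :=
    hasSum_sum fun k _ => ((hasSum_choose k hx).mul_left _)
  have heq : (fun n : ℕ => ∑ k ∈ Finset.range (m + 1),
      (stirling2 m k : ℝ) * (k.factorial : ℝ) * ((n.choose k : ℝ) * x ^ n)) =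
      fun n : ℕ => (n : ℝ) ^ m * x ^ n := by
    funext n
    have hn := pow_eq_sum_stirling m n
    have : ((n : ℝ)) ^ m = ∑ k ∈ Finset.range (m + 1),
        (stirling2 m k : ℝ) * (k.factorial : ℝ) * (n.choose k : ℝ) := by
      exact_mod_cast congrArg (Nat.cast : ℕ → ℝ) hn
    rw [this, Finset.sum_mul]
    exact Finset.sum_congr rfl fun k _ => by ring
  rw [heq] at hsum
  convert hsum using 1
  rw [Finset.mul_sum]
  refine Finset.sum_congr rfl fun k _ => ?_
  rw [div_pow, pow_succ]
  generalize (1 - x : ℝ) = y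
  ring
end

section
/- For every nonnegative integer m and real x, the m-th Euler polynomial satisfies E_m(x) = sum_{k=0}^m binomial(m,k) * ω_k(-1/2) * x^{m-k}, where ω_k is the geometric polynomial ω_k(t) = sum_{j=0}^k S(k,j) * j! * t^j. -/
/-- The Euler polynomial `E_m(x)`, defined via the generating function
`2 e^{xt}/(e^t + 1) = ∑ E_m(x) t^m / m!`. -/
noncomputable def eulerPoly (m : ℕ) (x : ℝ) : ℝ :=
  (m.factorial : ℝ) *
    PowerSeries.coeff (R := ℝ) m
      (2 * PowerSeries.rescale x (PowerSeries.exp ℝ) * (PowerSeries.exp ℝ + 1)⁻¹)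

lemma stirling2_succ_succ (m n : ℕ) :
    stirling2 (m + 1) (n + 1) = (n + 1) * stirling2 m (n + 1) + stirling2 m n := rfl

lemma stirling2_zero_right (n : ℕ) : stirling2 n 0 = if n = 0 then 1 else 0 := by
  cases n <;> simp [stirling2]

lemma stirling2_zero_left (j : ℕ) : stirling2 0 j = if j = 0 then 1 else 0 := by
  cases j <;> simp [stirling2]

lemma stirling2_one_right (n : ℕ) : stirling2 (n + 1) 1 = 1 := by
  induction n with
  | zero => rfl
  | succ n ih => rw [stirling2_succ_succ, ih, stirling2_zero_right]; simp

lemma stirling2_eq_zero_of_lt : ∀ {n j : ℕ}, n < j → stirling2 n j = 0 := by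
  intro n
  induction n with
  | zero => intro j h; cases j with
    | zero => omega
    | succ j => simp [stirling2]
  | succ n ih =>
    intro j h
    cases j with
    | zero => omega
    | succ j => rw [stirling2_succ_succ, ih (by omega), ih (by omega)]; ring

lemma stirling2_binom (n j : ℕ) :
    stirling2 (n + 1) (j + 1) = ∑ i ∈ Finset.range (n + 1), n.choose i * stirling2 i j := by
  induction n generalizing j with
  | zero => simp [stirling2_succ_succ, stirling2_zero_left, stirling2_zero_right]
  | succ n ih =>
    rw [Finset.sum_range_succ' _ (n + 1)]
    have h1 : ∀ i ∈ Finset.range (n + 1), (n + 1).choose (i + 1) * stirling2 (i + 1) j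
        = n.choose i * stirling2 (i + 1) j + n.choose (i + 1) * stirling2 (i + 1) j := by
      intro i _; rw [Nat.choose_succ_succ, add_mul]
    rw [Finset.sum_congr rfl h1, Finset.sum_add_distrib]
    have h2 : ∑ i ∈ Finset.range (n + 1), n.choose (i + 1) * stirling2 (i + 1) j
        + (n + 1).choose 0 * stirling2 0 j = stirling2 (n + 1) (j + 1) := by
      have e1 := Finset.sum_range_succ' (fun i => n.choose i * stirling2 i j) (n + 1)
      rw [Finset.sum_range_succ] at e1
      simp only [Nat.choose_succ_self, zero_mul, add_zero] at e1
      rw [ih j]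
      simpa using e1.symm
    have h3 : ∑ i ∈ Finset.range (n + 1), n.choose i * stirling2 (i + 1) j
        + stirling2 (n + 1) (j + 1) = stirling2 (n + 2) (j + 1) := by
      cases j with
      | zero =>
        have : ∀ i ∈ Finset.range (n + 1), n.choose i * stirling2 (i + 1) 0 = 0 := by
          intro i _; rw [stirling2_zero_right]; simp
        rw [Finset.sum_congr rfl this]
        simp [stirling2_one_right]
      | succ j =>
        have : ∀ i ∈ Finset.range (n + 1), n.choose i * stirling2 (i + 1) (j + 1)
            = (j + 1) * (n.choose i * stirling2 i (j + 1)) + n.choose i * stirling2 i j := by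
          intro i _; rw [stirling2_succ_succ]; ring
        rw [Finset.sum_congr rfl this, Finset.sum_add_distrib, ← Finset.mul_sum, ← ih, ← ih,
          stirling2_succ_succ (n + 1), stirling2_succ_succ n]
        ring
    simp only [show n + 1 + 1 = n + 2 from rfl]
    omega

open PowerSeries

lemma coeff_exp_real (n : ℕ) : coeff (R := ℝ) n (exp ℝ) = 1 / n.factorial := by
  rw [PowerSeries.coeff_exp]; push_cast; simp

lemma coeff_exp_mul (n : ℕ) (P : ℝ⟦X⟧) : coeff (R := ℝ) n (exp ℝ * P)
    = ∑ i ∈ Finset.range (n + 1), (1 / (n - i).factorial : ℝ) * coeff (R := ℝ) i P := by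
  rw [coeff_mul, Finset.Nat.sum_antidiagonal_eq_sum_range_succ_mk, ← Finset.sum_range_reflect]
  apply Finset.sum_congr rfl
  intro i hi
  simp only [Finset.mem_range] at hi
  rw [coeff_exp_real]
  have h1 : n + 1 - 1 - i = n - i := by omega
  have h2 : n - (n - i) = i := by omega
  rw [h1, h2]

lemma coeff_exp_sub_one_pow (j n : ℕ) :
    coeff (R := ℝ) n ((exp ℝ - 1) ^ j) = stirling2 n j * j.factorial / n.factorial := by
  induction j generalizing n with
  | zero =>
    rw [pow_zero, PowerSeries.coeff_one, stirling2_zero_right]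
    split <;> simp_all
  | succ j ih =>
    have hrw : (exp ℝ - 1) ^ (j + 1) = exp ℝ * (exp ℝ - 1) ^ j - (exp ℝ - 1) ^ j := by ring
    rw [hrw, map_sub, coeff_exp_mul]
    simp only [ih]
    have hterm : ∀ i ∈ Finset.range (n + 1),
        (1 / ((n - i).factorial : ℝ)) * (stirling2 i j * j.factorial / i.factorial)
        = (n.choose i * stirling2 i j : ℕ) * j.factorial / n.factorial := by
      intro i hi
      simp only [Finset.mem_range] at hi
      have key : (n.choose i * i.factorial * (n - i).factorial : ℝ) = n.factorial := by
        exact_mod_cast congrArg (Nat.cast (R := ℝ))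
          (Nat.choose_mul_factorial_mul_factorial (by omega : i ≤ n))
      have f1 : ((n - i).factorial : ℝ) ≠ 0 := Nat.cast_ne_zero.mpr (Nat.factorial_ne_zero _)
      have f2 : ((i).factorial : ℝ) ≠ 0 := Nat.cast_ne_zero.mpr (Nat.factorial_ne_zero _)
      have f3 : ((n).factorial : ℝ) ≠ 0 := Nat.cast_ne_zero.mpr (Nat.factorial_ne_zero _)
      push_cast
      field_simp
      linear_combination (-(stirling2 i j : ℝ)) * key
    rw [Finset.sum_congr rfl hterm, ← Finset.sum_div, ← Finset.sum_mul, ← Nat.cast_sum,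
      ← stirling2_binom, stirling2_succ_succ, Nat.factorial_succ]
    push_cast
    ring

/-- The geometric polynomial values `ω_k(-1/2)`. -/
noncomputable def wgeo (k : ℕ) : ℝ :=
  ∑ j ∈ Finset.range (k + 1), (stirling2 k j : ℝ) * (j.factorial : ℝ) * (-1 / 2) ^ j

/-- The EGF of `wgeo`. -/
noncomputable def Gser : ℝ⟦X⟧ := PowerSeries.mk fun k => wgeo k / k.factorial

noncomputable def useries : ℝ⟦X⟧ := (C (R := ℝ)) (-1 / 2) * (exp ℝ - 1)

lemma coeff_G_eq (n N : ℕ) (h : n ≤ N) :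
    coeff (R := ℝ) n Gser = coeff (R := ℝ) n (∑ j ∈ Finset.range (N + 1), useries ^ j) := by
  rw [map_sum]
  have hterm : ∀ j ∈ Finset.range (N + 1),
      coeff (R := ℝ) n (useries ^ j) = (stirling2 n j : ℝ) * (j.factorial : ℝ) * (-1 / 2) ^ j / n.factorial := by
    intro j _
    rw [useries, mul_pow, ← map_pow, coeff_C_mul, coeff_exp_sub_one_pow]
    ring
  rw [Finset.sum_congr rfl hterm]
  rw [Gser, coeff_mk, wgeo, Finset.sum_div]
  apply Finset.sum_subset
  · exact Finset.range_subset_range.mpr (by omega)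
  · intro j _ hj
    simp only [Finset.mem_range, not_lt] at hj
    rw [stirling2_eq_zero_of_lt (by omega)]
    simp

lemma keyG : (exp ℝ + 1) * Gser = 2 := by
  ext n
  rw [coeff_mul]
  have hsum : ∀ p ∈ Finset.HasAntidiagonal.antidiagonal n,
      coeff (R := ℝ) p.1 (exp ℝ + 1) * coeff (R := ℝ) p.2 Gser
      = coeff (R := ℝ) p.1 (exp ℝ + 1) * coeff (R := ℝ) p.2 (∑ j ∈ Finset.range (n + 1), useries ^ j) := by
    intro p hp
    rw [Finset.HasAntidiagonal.mem_antidiagonal] at hp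
    rw [coeff_G_eq p.2 n (by omega)]
  rw [Finset.sum_congr rfl hsum, ← coeff_mul]
  have hC : (2 : ℝ⟦X⟧) = (C (R := ℝ)) 2 := by
    rw [← map_ofNat ((C (R := ℝ))) 2]
  have h2 : (2 : ℝ⟦X⟧) * (1 - useries) = exp ℝ + 1 := by
    rw [useries, hC, mul_sub, mul_one, ← mul_assoc, ← map_mul]
    have he : (2 : ℝ) * (-1 / 2) = -1 := by norm_num
    rw [he, ← hC]
    simp only [map_neg, map_one]
    ring
  have hgeom := geom_sum_mul useries (n + 1)
  have halg : (exp ℝ + 1) * (∑ j ∈ Finset.range (n + 1), useries ^ j)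
      = 2 - 2 * useries ^ (n + 1) := by
    linear_combination (-(∑ j ∈ Finset.range (n + 1), useries ^ j)) * h2 - 2 * hgeom
  rw [halg, map_sub]
  have hu0 : constantCoeff (R := ℝ) useries = 0 := by
    rw [useries]
    simp [PowerSeries.constantCoeff_exp]
  have hXdvd : (X : ℝ⟦X⟧) ^ (n + 1) ∣ useries ^ (n + 1) :=
    pow_dvd_pow_of_dvd (PowerSeries.X_dvd_iff.mpr hu0) (n + 1)
  have hcz : coeff (R := ℝ) n (useries ^ (n + 1)) = 0 := by
    obtain ⟨c, hc⟩ := hXdvd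
    rw [hc, coeff_X_pow_mul']
    simp
  have h4 : (2 : ℝ⟦X⟧) * useries ^ (n + 1) = (C (R := ℝ)) 2 * useries ^ (n + 1) := by rw [← hC]
  rw [h4, coeff_C_mul, hcz, mul_zero, sub_zero]

lemma inv_eq_G : 2 * (PowerSeries.exp ℝ + 1)⁻¹ = Gser := by
  have hc : constantCoeff (R := ℝ) (exp ℝ + 1) ≠ 0 := by
    simp [PowerSeries.constantCoeff_exp]
  calc 2 * (exp ℝ + 1)⁻¹ = ((exp ℝ + 1) * Gser) * (exp ℝ + 1)⁻¹ := by rw [keyG]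
    _ = Gser * ((exp ℝ + 1) * (exp ℝ + 1)⁻¹) := by ring
    _ = Gser := by rw [PowerSeries.mul_inv_cancel _ hc, mul_one]

theorem eulerPoly_eq_geometric_poly_sum (m : ℕ) (x : ℝ) :
    eulerPoly m x
      = ∑ k ∈ Finset.range (m + 1), (m.choose k : ℝ) *
          (∑ j ∈ Finset.range (k + 1),
            (stirling2 k j : ℝ) * (j.factorial : ℝ) * (-1 / 2) ^ j) * x ^ (m - k) := by
  have hre : 2 * PowerSeries.rescale x (PowerSeries.exp ℝ) * (PowerSeries.exp ℝ + 1)⁻¹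
      = PowerSeries.rescale x (PowerSeries.exp ℝ) * Gser := by
    rw [← inv_eq_G]; ring
  rw [eulerPoly, hre, coeff_mul, Finset.Nat.sum_antidiagonal_eq_sum_range_succ_mk,
    ← Finset.sum_range_reflect, Finset.mul_sum]
  apply Finset.sum_congr rfl
  intro k hk
  simp only [Finset.mem_range] at hk
  have h1 : m + 1 - 1 - k = m - k := by omega
  have h2 : m - (m - k) = k := by omega
  rw [h1, h2, coeff_rescale, coeff_exp_real, Gser, coeff_mk]
  have key : (m.choose k * k.factorial * (m - k).factorial : ℝ) = m.factorial := by
    exact_mod_cast congrArg (Nat.cast (R := ℝ))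
      (Nat.choose_mul_factorial_mul_factorial (by omega : k ≤ m))
  have f1 : ((m - k).factorial : ℝ) ≠ 0 := Nat.cast_ne_zero.mpr (Nat.factorial_ne_zero _)
  have f2 : ((k).factorial : ℝ) ≠ 0 := Nat.cast_ne_zero.mpr (Nat.factorial_ne_zero _)
  rw [show wgeo k = ∑ j ∈ Finset.range (k + 1),
      (stirling2 k j : ℝ) * (j.factorial : ℝ) * (-1 / 2) ^ j from rfl]
  set W := ∑ j ∈ Finset.range (k + 1), (stirling2 k j : ℝ) * (j.factorial : ℝ) * (-1 / 2) ^ j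
  field_simp
  linear_combination (-(W * x ^ (m - k))) * key
end
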